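/- If A is an ancestor of finite height of a normal vertex B of a quiver (i.e. A ≤ B, h(A) < ∞, and B is normal), then both A and B are phylogenetic. -/

import Mathlib

universe u
variable {V : Type u} [Quiver V]

/-- An evolution of length `m` with vertex sequence `A 0, A 1, ..., A m`:
for each `k < m` there is an edge from `A (k+1)` to `A k`
(the paper's evolution `A 0 ← A 1 ← ⋯ ← A m`). -/
def IsEvol (A : ℕ → V) (m : ℕ) : Prop := ∀ k < m, Nonempty (A (k + 1) ⟶ A k)

/-- `Anc X Y` : `X` is an ancestor of `Y`, i.e. there is an evolution from `X` to `Y`. -/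
def Anc (X Y : V) : Prop := ∃ (m : ℕ) (A : ℕ → V), IsEvol A m ∧ A 0 = X ∧ A m = Y

/-- `X` and `Y` are isotypic. -/
def Isotypic (X Y : V) : Prop := Anc X Y ∧ Anc Y X

/-- A vertex is primitive if every ancestor of it is isotypic to it. -/
def Primitive (X : V) : Prop := ∀ B : V, Anc B X → Anc X B

/-- A full evolution for `X` : an evolution from a primitive vertex to `X`. -/
def IsFullEvol (A : ℕ → V) (m : ℕ) (X : V) : Prop :=
  IsEvol A m ∧ Primitive (A 0) ∧ A m = X

/-- The height of a vertex: the least length of a full evolution for it (`⊤` if none). -/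
noncomputable def height (X : V) : ℕ∞ :=
  sInf {n : ℕ∞ | ∃ m : ℕ, n = (m : ℕ∞) ∧ ∃ A : ℕ → V, IsFullEvol A m X}

/-- `A` is a critical ancestor of `B`. -/
def CritAnc (A B : V) : Prop :=
  height A < ⊤ ∧ ∃ (m : ℕ) (E : ℕ → V), 0 < m ∧ IsEvol E m ∧ E 0 = A ∧ E m = B ∧
    height (E 1) = height A + 1

/-- A vertex is normal if any two of its critical ancestors of equal height are isotypic. -/
def NormalVtx (B : V) : Prop :=
  ∀ A A' : V, CritAnc A B → CritAnc A' B → height A = height A' → Isotypic A A'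

/-- The evolution `(A, m)` embeds in the evolution `(B, n)`. -/
def Embeds (A : ℕ → V) (m : ℕ) (B : ℕ → V) (n : ℕ) : Prop :=
  m ≤ n ∧ ∃ r : ℕ → ℕ, (∀ k < m, r k < r (k + 1)) ∧ r m ≤ n ∧
    ∀ k ≤ m, Isotypic (A k) (B (r k))

/-- A universal evolution for `X`: a full evolution for `X` embedding in every
full evolution for `X`. -/
def IsUniversalEvol (A : ℕ → V) (m : ℕ) (X : V) : Prop :=
  IsFullEvol A m X ∧ ∀ (B : ℕ → V) (n : ℕ), IsFullEvol B n X → Embeds A m B n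

/-- A vertex is phylogenetic if it admits a universal evolution. -/
def Phylogenetic (X : V) : Prop := ∃ (A : ℕ → V) (m : ℕ), IsUniversalEvol A m X

/-- A quiver is monotonous if `h(A) ≥ h(B)` for every edge `A → B`. -/
def Monotonous (V : Type u) [Quiver V] : Prop :=
  ∀ A B : V, Nonempty (A ⟶ B) → height B ≤ height A

/-- A vertex `A` is regular if for every descendant `B` of `A` with `h(B) = h(A)`
there is an edge `B → A`. -/
def Regular (A : V) : Prop :=
  ∀ B : V, Anc A B → height B = height A → Nonempty (B ⟶ A)

/-- The clade of a vertex `A`: the full subquiver of descendants of `A`. -/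
abbrev Clade (A : V) : Type u := {B : V // Anc A B}

instance (A : V) : Quiver (Clade A) := ⟨fun X Y => X.val ⟶ Y.val⟩

-- auxiliary lemmas

lemma anc_refl' (X : V) : Anc X X :=
  ⟨0, fun _ => X, fun k hk => absurd hk (Nat.not_lt_zero k), rfl, rfl⟩

lemma isotypic_refl' (X : V) : Isotypic X X := ⟨anc_refl' X, anc_refl' X⟩

lemma height_le_of_full' {A : ℕ → V} {m : ℕ} {X : V} (h : IsFullEvol A m X) :
    height X ≤ (m : ℕ∞) :=
  sInf_le ⟨m, rfl, A, h⟩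

lemma full_prefix' {A : ℕ → V} {m : ℕ} {X : V} (h : IsFullEvol A m X) {j : ℕ} (hj : j ≤ m) :
    IsFullEvol A j (A j) :=
  ⟨fun k hk => h.1 k (lt_of_lt_of_le hk hj), h.2.1, rfl⟩

lemma exists_short' {X : V} (h : height X < ⊤) :
    ∃ (m : ℕ) (A : ℕ → V), IsFullEvol A m X ∧ height X = (m : ℕ∞) := by
  classical
  set S : Set ℕ := {m | ∃ A : ℕ → V, IsFullEvol A m X} with hSdef
  have hS : S.Nonempty := by
    by_contra hemp
    rw [Set.not_nonempty_iff_eq_empty] at hemp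
    have : {n : ℕ∞ | ∃ m : ℕ, n = (m : ℕ∞) ∧ ∃ A : ℕ → V, IsFullEvol A m X} = ∅ := by
      ext n
      simp only [Set.mem_setOf_eq, Set.mem_empty_iff_false, iff_false, not_exists]
      rintro m ⟨rfl, A, hA⟩
      have : m ∈ S := ⟨A, hA⟩
      simp [hemp] at this
    rw [height, this, sInf_empty] at h
    exact absurd h (lt_irrefl _)
  obtain ⟨A, hA⟩ := Nat.sInf_mem hS
  refine ⟨sInf S, A, hA, le_antisymm (height_le_of_full' hA) ?_⟩
  apply le_sInf
  rintro n ⟨m, rfl, A', hA'⟩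
  have hm : sInf S ≤ m := Nat.sInf_le ⟨A', hA'⟩
  exact_mod_cast hm

lemma evol_tail' {A : ℕ → V} {m : ℕ} (h : IsEvol A m) (i : ℕ) :
    IsEvol (fun t => A (t + i)) (m - i) := by
  intro k hk
  have h1 : k + i < m := by omega
  simpa [show k + 1 + i = k + i + 1 from by omega] using h (k + i) h1

lemma evol_concat' {A B : ℕ → V} {m n : ℕ} (hA : IsEvol A m) (hB : IsEvol B n)
    (hAB : A m = B 0) :
    ∃ C : ℕ → V, IsEvol C (m + n) ∧ (∀ j ≤ m, C j = A j) ∧ C (m + n) = B n := by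
  refine ⟨fun j => if j ≤ m then A j else B (j - m), ?_, ?_, ?_⟩
  · intro k hk
    by_cases h1 : k + 1 ≤ m
    · simpa [h1, show k ≤ m from by omega] using hA k (by omega)
    · by_cases h2 : k ≤ m
      · have hkm : k = m := by omega
        have hn : 0 < n := by omega
        simpa [h1, h2, hkm, hAB, show m + 1 - m = 1 from by omega] using hB 0 hn
      · have : k + 1 - m = (k - m) + 1 := by omega
        simpa [h1, h2, this] using hB (k - m) (by omega)
  · intro j hj; simp [hj]
  · by_cases h : m + n ≤ m
    · have : n = 0 := by omega
      simp [h, this, ← hAB, show m + n = m from by omega]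
    · simp [h]

lemma height_le_evol' {E : ℕ → V} {ℓ : ℕ} (hE : IsEvol E ℓ) :
    height (E ℓ) ≤ height (E 0) + ℓ := by
  rcases eq_top_or_lt_top (height (E 0)) with h | h
  · simp [h]
  · obtain ⟨m, A, hA, hm⟩ := exists_short' h
    obtain ⟨C, hC, hpre, hend⟩ := evol_concat' hA.1 hE (by rw [hA.2.2])
    have hfull : IsFullEvol C (m + ℓ) (E ℓ) := by
      refine ⟨hC, ?_, hend⟩
      rw [hpre 0 (Nat.zero_le m)]; exact hA.2.1
    calc height (E ℓ) ≤ ((m + ℓ : ℕ) : ℕ∞) := height_le_of_full' hfull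
      _ = height (E 0) + ℓ := by rw [hm]; push_cast; ring

lemma short_heights' {C : ℕ → V} {n : ℕ} {X : V} (hC : IsFullEvol C n X)
    (hn : height X = (n : ℕ∞)) : ∀ k ≤ n, height (C k) = (k : ℕ∞) := by
  intro k hk
  refine le_antisymm (height_le_of_full' (full_prefix' hC hk)) ?_
  by_contra hlt
  push_neg at hlt
  have hfin : height (C k) < ⊤ := lt_of_lt_of_le hlt le_top
  obtain ⟨e, A, hA, he⟩ := exists_short' hfin
  have hek : e < k := by
    rw [he] at hlt; exact_mod_cast hlt
  have htail : IsEvol (fun t => C (t + k)) (n - k) := evol_tail' hC.1 k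
  obtain ⟨G, hG, hGpre, hGend⟩ := evol_concat' hA.1 htail (by simpa using hA.2.2)
  have hGfull : IsFullEvol G (e + (n - k)) X := by
    refine ⟨hG, ?_, ?_⟩
    · rw [hGpre 0 (Nat.zero_le e)]; exact hA.2.1
    · rw [hGend]; show C (n - k + k) = X
      rw [Nat.sub_add_cancel hk]; exact hC.2.2
  have := height_le_of_full' hGfull
  rw [hn] at this
  have : n ≤ e + (n - k) := by exact_mod_cast this
  omega

lemma critAnc_of_tail' {D : ℕ → V} {m j : ℕ} {X : V} (hD : IsEvol D m) (hjm : j < m)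
    (hDm : D m = X) (hfin : height (D j) < ⊤)
    (hstep : height (D (j + 1)) = height (D j) + 1) : CritAnc (D j) X := by
  refine ⟨hfin, m - j, fun t => D (t + j), by omega, evol_tail' hD j, by simp, ?_, ?_⟩
  · show D (m - j + j) = X
    rw [Nat.sub_add_cancel hjm.le]; exact hDm
  · show height (D (1 + j)) = height (D j) + 1
    rwa [Nat.add_comm]

lemma normal_phylo' {X : V} (hfin : height X < ⊤) (hN : NormalVtx X) : Phylogenetic X := by
  classical
  obtain ⟨n, C, hC, hn⟩ := exists_short' hfin
  refine ⟨C, n, hC, ?_⟩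
  intro D m hD
  have hDle : ∀ j ≤ m, height (D j) ≤ (j : ℕ∞) :=
    fun j hj => height_le_of_full' (full_prefix' hD hj)
  have hDm : height (D m) = (n : ℕ∞) := by rw [hD.2.2, hn]
  have hnm : n ≤ m := by
    have := hDle m le_rfl
    rw [hDm] at this
    exact_mod_cast this
  have step : ∀ j < m, height (D (j + 1)) ≤ height (D j) + 1 := by
    intro j hj
    have hE : IsEvol (fun t => D (t + j)) 1 := by
      intro k hk
      interval_cases k
      simpa [Nat.add_comm] using hD.1 j hj
    simpa [Nat.add_comm] using height_le_evol' hE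
  -- the sets of indices of height ≤ k
  set S : ℕ → Set ℕ := fun k => {j | j ≤ m ∧ height (D j) ≤ (k : ℕ∞)} with hSdef
  have hSne : ∀ k, (S k).Nonempty := by
    intro k
    have h0 : height (D 0) ≤ ((0 : ℕ) : ℕ∞) := hDle 0 (Nat.zero_le m)
    exact ⟨0, Nat.zero_le m, h0.trans (by exact_mod_cast Nat.zero_le k)⟩
  have hSbdd : ∀ k, BddAbove (S k) := fun k => ⟨m, fun j hj => hj.1⟩
  set r : ℕ → ℕ := fun k => if k < n then sSup (S k) else m with hrdef
  -- facts about jk := sSup (S k) for k < n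
  have hmem : ∀ k, sSup (S k) ∈ S k := fun k => Nat.sSup_mem (hSne k) (hSbdd k)
  have hjlt : ∀ k < n, sSup (S k) < m := by
    intro k hk
    rcases (hmem k) with ⟨h1, h2⟩
    rcases lt_or_eq_of_le h1 with h | h
    · exact h
    · exfalso
      rw [h, hDm] at h2
      have : n ≤ k := by exact_mod_cast h2
      omega
  have hnotmem : ∀ k < n, ¬ ((k : ℕ∞) < height (D (sSup (S k))) ) := by
    intro k hk h
    exact absurd (hmem k).2 (not_le.mpr h)
  have hsucc : ∀ k < n, height (D (sSup (S k) + 1)) = (k : ℕ∞) + 1 := by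
    intro k hk
    have hjm := hjlt k hk
    have h1 : ¬ (sSup (S k) + 1 ∈ S k) := by
      intro hmem'
      have := le_csSup (hSbdd k) hmem'
      omega
    have h2 : (k : ℕ∞) < height (D (sSup (S k) + 1)) := by
      by_contra h
      push_neg at h
      exact h1 ⟨by omega, h⟩
      -- need sSup (S k) + 1 ≤ m
    have h3 : height (D (sSup (S k) + 1)) ≤ height (D (sSup (S k))) + 1 :=
      step _ (hjlt k hk)
    have h4 : height (D (sSup (S k) + 1)) ≤ (k : ℕ∞) + 1 :=
      le_trans h3 (add_le_add (hmem k).2 le_rfl)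
    refine le_antisymm h4 ?_
    exact (ENat.add_one_le_iff (by simp)).mpr h2
  have hexact : ∀ k < n, height (D (sSup (S k))) = (k : ℕ∞) := by
    intro k hk
    refine le_antisymm (hmem k).2 ?_
    have h3 : height (D (sSup (S k) + 1)) ≤ height (D (sSup (S k))) + 1 :=
      step _ (hjlt k hk)
    rw [hsucc k hk] at h3
    have hlt : height (D (sSup (S k))) < ⊤ := lt_of_le_of_lt (hmem k).2 (by simp)
    lift height (D (sSup (S k))) to ℕ using hlt.ne with b hb
    have hb1 : k + 1 ≤ b + 1 := by exact_mod_cast h3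
    exact_mod_cast Nat.le_of_succ_le_succ hb1
  have hcritD : ∀ k < n, CritAnc (D (sSup (S k))) X := by
    intro k hk
    refine critAnc_of_tail' hD.1 (hjlt k hk) hD.2.2 ?_ ?_
    · rw [hexact k hk]; exact WithTop.coe_lt_top k
    · rw [hsucc k hk, hexact k hk]
  have hcritC : ∀ k < n, CritAnc (C k) X := by
    intro k hk
    refine critAnc_of_tail' hC.1 hk hC.2.2 ?_ ?_
    · rw [short_heights' hC hn k hk.le]; exact WithTop.coe_lt_top k
    · rw [short_heights' hC hn (k + 1) hk, short_heights' hC hn k hk.le]; push_cast; ring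
  have hiso : ∀ k < n, Isotypic (C k) (D (sSup (S k))) := fun k hk =>
    hN _ _ (hcritC k hk) (hcritD k hk)
      (by rw [short_heights' hC hn k hk.le, hexact k hk])
  refine ⟨hnm, r, ?_, ?_, ?_⟩
  · intro k hk
    by_cases h2 : k + 1 < n
    · simp only [hrdef, if_pos hk, if_pos h2]
      have hjm := hjlt k hk
      have hmem' : sSup (S k) + 1 ∈ S (k + 1) := by
        refine ⟨by omega, ?_⟩
        rw [hsucc k hk]; push_cast; exact le_refl _
      have := le_csSup (hSbdd (k + 1)) hmem'
      omega
    · simp only [hrdef, if_pos hk, if_neg h2]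
      exact hjlt k hk
  · simp [hrdef]
  · intro k hk
    rcases lt_or_eq_of_le hk with h | h
    · simp only [hrdef, if_pos h]
      exact hiso k h
    · subst h
      simp only [hrdef, lt_irrefl, if_neg, if_false]
      rw [hC.2.2, hD.2.2]
      exact isotypic_refl' X

lemma critAnc_trans' {X A B : V} (h : CritAnc X A) (hAB : Anc A B) : CritAnc X B := by
  obtain ⟨hfin, ℓ, E, hℓ, hE, hE0, hEℓ, hE1⟩ := h
  obtain ⟨p, F, hF, hF0, hFp⟩ := hAB
  obtain ⟨G, hG, hGpre, hGend⟩ := evol_concat' hE hF (by rw [hEℓ, hF0])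
  refine ⟨hfin, ℓ + p, G, by omega, hG, ?_, ?_, ?_⟩
  · rw [hGpre 0 (Nat.zero_le ℓ), hE0]
  · rw [hGend, hFp]
  · rw [hGpre 1 hℓ, hE1]

theorem stmt_8 (A B : V) (hAB : Anc A B) (hA : height A < ⊤) (hB : NormalVtx B) :
    Phylogenetic A ∧ Phylogenetic B := by
  have hBfin : height B < ⊤ := by
    obtain ⟨p, F, hF, hF0, hFp⟩ := hAB
    have hle := height_le_evol' hF
    rw [hF0, hFp] at hle
    exact lt_of_le_of_lt hle (WithTop.add_lt_top.mpr ⟨hA, WithTop.coe_lt_top p⟩)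
  have hNA : NormalVtx A := fun X X' h1 h2 hh =>
    hB X X' (critAnc_trans' h1 hAB) (critAnc_trans' h2 hAB) hh
  exact ⟨normal_phylo' hA hNA, normal_phylo' hBfin hB⟩
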